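/- Let l and r be positive integers and let g : A_l → A_r be an isomorphism of ℚ-algebras. Write g(ā) = α₁·b̄ + β₁·ȳ and g(x̄) = α₂·b̄ + β₂·ȳ, where ā, x̄ denote the residue classes of a, x in A_l and b̄, ȳ denote the residue classes of a, x in A_r, and α₁, β₁, α₂, β₂ ∈ ℚ (assuming g maps the span of ā, x̄ into the span of b̄, ȳ). Then β₁ = 0 and α₂ = 0; that is, g(ā) is a scalar multiple of b̄ and g(x̄) is a scalar multiple of ȳ. -/

import Mathlib

open MvPolynomial

/-- The ideal `(a⁶, a²x, l²a⁴ + (6l−2)ax³ + lx⁴)` in `ℚ[a,x]`, where `a = X 0` and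
`x = X 1`. -/
noncomputable def blowUpIdeal (l : ℕ) : Ideal (MvPolynomial (Fin 2) ℚ) :=
  Ideal.span
    { X 0 ^ 6, X 0 ^ 2 * X 1,
      C ((l : ℚ) ^ 2) * X 0 ^ 4 + C (6 * (l : ℚ) - 2) * X 0 * X 1 ^ 3 + C (l : ℚ) * X 1 ^ 4 }

/-- `A_l = ℚ[a,x] / (a⁶, a²x, l²a⁴ + (6l−2)ax³ + lx⁴)`, the cohomology algebra of the
blow-up of `ℂP(5)` along the symplectic embedding `f_l : ℂP(1) → ℂP(5)`. -/
noncomputable abbrev BlowUpAlg (l : ℕ) : Type :=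
  MvPolynomial (Fin 2) ℚ ⧸ blowUpIdeal l

/-- The residue class of `a` in `A_l`. -/
noncomputable def aBar (l : ℕ) : BlowUpAlg l := Ideal.Quotient.mk (blowUpIdeal l) (X 0)

/-- The residue class of `x` in `A_l`. -/
noncomputable def xBar (l : ℕ) : BlowUpAlg l := Ideal.Quotient.mk (blowUpIdeal l) (X 1)

/- ### Auxiliary lemmas -/

lemma coeff_eq_zero_of_mem' {c d : ℕ} {m : Fin 2 →₀ ℕ} (h0 : m 0 < c) (h1 : m 1 < d)
    {p : MvPolynomial (Fin 2) ℚ} (hp : p ∈ Ideal.span {X 0 ^ c, X 1 ^ d}) :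
    coeff m p = 0 := by
  rw [Ideal.mem_span_pair] at hp
  obtain ⟨u, v, rfl⟩ := hp
  rw [X_pow_eq_monomial, X_pow_eq_monomial, coeff_add, coeff_mul_monomial', coeff_mul_monomial',
    if_neg, if_neg, add_zero]
  · intro hle; exact absurd (Finsupp.single_le_iff.mp hle) (not_le.mpr h1)
  · intro hle; exact absurd (Finsupp.single_le_iff.mp hle) (not_le.mpr h0)

lemma not_mem_span' {c d e0 e1 : ℕ} (h0 : e0 < c) (h1 : e1 < d) :
    (X 0 ^ e0 * X 1 ^ e1 : MvPolynomial (Fin 2) ℚ) ∉ Ideal.span {X 0 ^ c, X 1 ^ d} := by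
  intro hp
  have hm := coeff_eq_zero_of_mem' (m := Finsupp.single 0 e0 + Finsupp.single 1 e1) ?_ ?_ hp
  · rw [X_pow_eq_monomial, X_pow_eq_monomial, monomial_mul, coeff_monomial, if_pos rfl] at hm
    simp at hm
  · simpa using h0
  · simpa using h1

noncomputable def substHom (I J : Ideal (MvPolynomial (Fin 2) ℚ))
    (v : Fin 2 → MvPolynomial (Fin 2) ℚ) (h : ∀ p ∈ I, aeval v p ∈ J) :
    (MvPolynomial (Fin 2) ℚ ⧸ I) →ₐ[ℚ] MvPolynomial (Fin 2) ℚ ⧸ J :=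
  Ideal.Quotient.liftₐ I ((Ideal.Quotient.mkₐ ℚ J).comp (aeval v))
    (fun p hp => by
      rw [AlgHom.comp_apply, Ideal.Quotient.mkₐ_eq_mk, Ideal.Quotient.eq_zero_iff_mem]
      exact h p hp)

lemma substHom_mk (I J : Ideal (MvPolynomial (Fin 2) ℚ))
    (v : Fin 2 → MvPolynomial (Fin 2) ℚ) (h : ∀ p ∈ I, aeval v p ∈ J)
    (p : MvPolynomial (Fin 2) ℚ) :
    substHom I J v h (Ideal.Quotient.mk I p) = Ideal.Quotient.mk J (aeval v p) := by
  simp [substHom]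
  exact Ideal.Quotient.lift_mk _ _ _

lemma cond1 (l : ℕ) : ∀ p ∈ blowUpIdeal l,
    aeval X p ∈ Ideal.span {(X 0 : MvPolynomial (Fin 2) ℚ) ^ 2, X 1 ^ 3} := by
  intro p hp
  rw [aeval_X_left_apply]
  refine Ideal.span_le.mpr ?_ hp
  rintro q hq
  simp only [Set.mem_insert_iff, Set.mem_singleton_iff] at hq
  rcases hq with rfl | rfl | rfl
  · exact Ideal.mem_span_pair.mpr ⟨X 0 ^ 4, 0, by ring⟩
  · exact Ideal.mem_span_pair.mpr ⟨X 1, 0, by ring⟩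
  · exact Ideal.mem_span_pair.mpr
      ⟨C ((l : ℚ) ^ 2) * X 0 ^ 2, C (6 * (l : ℚ) - 2) * X 0 + C (l : ℚ) * X 1, by ring⟩

lemma cond2 (r : ℕ) : ∀ p ∈ blowUpIdeal r,
    aeval ![X 0, 0] p ∈ Ideal.span {(X 0 : MvPolynomial (Fin 2) ℚ) ^ 4, X 1 ^ 1} := by
  intro p hp
  have key : blowUpIdeal r ≤
      Ideal.comap (aeval ![X 0, 0]) (Ideal.span {(X 0 : MvPolynomial (Fin 2) ℚ) ^ 4, X 1 ^ 1}) := by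
    rw [blowUpIdeal, Ideal.span_le]
    rintro q hq
    simp only [Set.mem_insert_iff, Set.mem_singleton_iff] at hq
    rw [SetLike.mem_coe, Ideal.mem_comap]
    rcases hq with rfl | rfl | rfl
    · simp only [map_pow, aeval_X, Matrix.cons_val_zero]
      exact Ideal.mem_span_pair.mpr ⟨X 0 ^ 2, 0, by ring⟩
    · simp only [map_mul, map_pow, aeval_X, Matrix.cons_val_zero, Matrix.cons_val_one,
        Matrix.head_cons, mul_zero]
      exact zero_mem _
    · simp only [map_add, map_mul, map_pow, aeval_X, aeval_C, Matrix.cons_val_zero,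
        Matrix.cons_val_one, Matrix.head_cons, MvPolynomial.algebraMap_eq]
      refine Ideal.mem_span_pair.mpr ⟨C (r : ℚ) ^ 2, 0, by ring⟩
  exact key hp

lemma cond3 (r : ℕ) : ∀ p ∈ blowUpIdeal r,
    aeval ![0, X 1] p ∈ Ideal.span {(X 0 : MvPolynomial (Fin 2) ℚ) ^ 1, X 1 ^ 4} := by
  intro p hp
  have key : blowUpIdeal r ≤
      Ideal.comap (aeval ![0, X 1]) (Ideal.span {(X 0 : MvPolynomial (Fin 2) ℚ) ^ 1, X 1 ^ 4}) := by
    rw [blowUpIdeal, Ideal.span_le]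
    rintro q hq
    simp only [Set.mem_insert_iff, Set.mem_singleton_iff] at hq
    rw [SetLike.mem_coe, Ideal.mem_comap]
    rcases hq with rfl | rfl | rfl
    · simp only [map_pow, aeval_X, Matrix.cons_val_zero]
      simpa using zero_mem (Ideal.span {(X 0 : MvPolynomial (Fin 2) ℚ) ^ 1, X 1 ^ 4})
    · simp only [map_mul, map_pow, aeval_X, Matrix.cons_val_zero, Matrix.cons_val_one,
        Matrix.head_cons]
      simpa using zero_mem (Ideal.span {(X 0 : MvPolynomial (Fin 2) ℚ) ^ 1, X 1 ^ 4})
    · simp only [map_add, map_mul, map_pow, aeval_X, aeval_C, Matrix.cons_val_zero,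
        Matrix.cons_val_one, Matrix.head_cons, MvPolynomial.algebraMap_eq]
      refine Ideal.mem_span_pair.mpr ⟨0, C (r : ℚ), by ring⟩
  exact key hp

lemma rel_a2x (l : ℕ) : (aBar l) ^ 2 * xBar l = 0 := by
  rw [aBar, xBar, ← map_pow, ← map_mul, Ideal.Quotient.eq_zero_iff_mem]
  exact Ideal.subset_span (by simp)

set_option maxHeartbeats 1000000 in
set_option synthInstance.maxHeartbeats 400000 in
theorem blowUpAlg_iso_diagonal (l r : ℕ) (hl : 0 < l) (hr : 0 < r)
    (g : BlowUpAlg l ≃ₐ[ℚ] BlowUpAlg r) (α₁ β₁ α₂ β₂ : ℚ)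
    (ha : g (aBar l) = α₁ • aBar r + β₁ • xBar r)
    (hx : g (xBar l) = α₂ • aBar r + β₂ • xBar r) :
    β₁ = 0 ∧ α₂ = 0 := by
  set φ1 := substHom (blowUpIdeal l) (Ideal.span {X 0 ^ 2, X 1 ^ 3}) X (cond1 l) with hφ1
  set φ2 := substHom (blowUpIdeal r) (Ideal.span {X 0 ^ 4, X 1 ^ 1}) ![X 0, 0] (cond2 r) with hφ2
  set φ3 := substHom (blowUpIdeal r) (Ideal.span {X 0 ^ 1, X 1 ^ 4}) ![0, X 1] (cond3 r) with hφ3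
  -- nonvanishing facts in `A_l`
  have hane : aBar l ≠ 0 := by
    intro h
    have h1 : φ1 (aBar l) = Ideal.Quotient.mk _ (X 0) := by
      rw [aBar, hφ1, substHom_mk, aeval_X_left_apply]
    rw [h, map_zero] at h1
    have hm : (X 0 : MvPolynomial (Fin 2) ℚ) ∈ Ideal.span {X 0 ^ 2, X 1 ^ 3} :=
      Ideal.Quotient.eq_zero_iff_mem.mp h1.symm
    exact not_mem_span' (c := 2) (d := 3) (e0 := 1) (e1 := 0) one_lt_two (by norm_num)
      (by simpa using hm)
  have hxne : xBar l ≠ 0 := by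
    intro h
    have h1 : φ1 (xBar l) = Ideal.Quotient.mk _ (X 1) := by
      rw [xBar, hφ1, substHom_mk, aeval_X_left_apply]
    rw [h, map_zero] at h1
    have hm : (X 1 : MvPolynomial (Fin 2) ℚ) ∈ Ideal.span {X 0 ^ 2, X 1 ^ 3} :=
      Ideal.Quotient.eq_zero_iff_mem.mp h1.symm
    exact not_mem_span' (c := 2) (d := 3) (e0 := 0) (e1 := 1) (by norm_num) (by norm_num)
      (by simpa using hm)
  have haxx : aBar l * (xBar l) ^ 2 ≠ 0 := by
    intro h
    have h1 : φ1 (aBar l * (xBar l) ^ 2) = Ideal.Quotient.mk _ (X 0 * X 1 ^ 2) := by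
      rw [aBar, xBar, ← map_pow, ← map_mul, hφ1, substHom_mk, aeval_X_left_apply]
    rw [h, map_zero] at h1
    have hm : (X 0 * X 1 ^ 2 : MvPolynomial (Fin 2) ℚ) ∈ Ideal.span {X 0 ^ 2, X 1 ^ 3} :=
      Ideal.Quotient.eq_zero_iff_mem.mp h1.symm
    exact not_mem_span' (c := 2) (d := 3) (e0 := 1) (e1 := 2) one_lt_two (by norm_num)
      (by simpa using hm)
  -- the key relation transported by `g`
  have key : (α₁ • aBar r + β₁ • xBar r) ^ 2 * (α₂ • aBar r + β₂ • xBar r) = 0 := by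
    rw [← ha, ← hx, ← map_pow, ← map_mul, rel_a2x, map_zero]
  -- image of the key relation under φ2
  have hφ2a : φ2 (aBar r) = Ideal.Quotient.mk _ (X 0) := by
    rw [aBar, hφ2, substHom_mk]; simp
  have hφ2x : φ2 (xBar r) = 0 := by
    rw [xBar, hφ2, substHom_mk]; simp
  have hS3 : (Ideal.Quotient.mk (Ideal.span {(X 0 : MvPolynomial (Fin 2) ℚ) ^ 4, X 1 ^ 1})
      (X 0)) ^ 3 ≠ 0 := by
    rw [← map_pow, Ne, Ideal.Quotient.eq_zero_iff_mem]
    intro hmem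
    exact not_mem_span' (c := 4) (d := 1) (e0 := 3) (e1 := 0) (by norm_num) one_pos
      (by simpa using hmem)
  have h2 : α₁ ^ 2 * α₂ = 0 := by
    have hk := congrArg φ2 key
    rw [map_mul, map_pow, map_add, map_add, map_smul, map_smul, map_smul, map_smul,
      hφ2a, hφ2x, map_zero, smul_zero, smul_zero, add_zero, add_zero, smul_pow,
      smul_mul_assoc, mul_smul_comm, smul_smul, ← pow_succ] at hk
    rcases smul_eq_zero.mp hk with h | h
    · exact h
    · exact absurd h hS3
  -- image of the key relation under φ3
  have hφ3a : φ3 (aBar r) = 0 := by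
    rw [aBar, hφ3, substHom_mk]; simp
  have hφ3x : φ3 (xBar r) = Ideal.Quotient.mk _ (X 1) := by
    rw [xBar, hφ3, substHom_mk]; simp
  have hT3 : (Ideal.Quotient.mk (Ideal.span {(X 0 : MvPolynomial (Fin 2) ℚ) ^ 1, X 1 ^ 4})
      (X 1)) ^ 3 ≠ 0 := by
    rw [← map_pow, Ne, Ideal.Quotient.eq_zero_iff_mem]
    intro hmem
    exact not_mem_span' (c := 1) (d := 4) (e0 := 0) (e1 := 3) one_pos (by norm_num)
      (by simpa using hmem)
  have h3 : β₁ ^ 2 * β₂ = 0 := by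
    have hk := congrArg φ3 key
    rw [map_mul, map_pow, map_add, map_add, map_smul, map_smul, map_smul, map_smul,
      hφ3a, hφ3x, smul_zero, smul_zero, zero_add, zero_add, smul_pow,
      smul_mul_assoc, mul_smul_comm, smul_smul, ← pow_succ, map_zero] at hk
    rcases smul_eq_zero.mp hk with h | h
    · exact h
    · exact absurd h hT3
  -- conclude
  have hβ1 : β₁ = 0 := by
    by_contra hb
    have hβ2 : β₂ = 0 := by
      rcases mul_eq_zero.mp h3 with h | h
      · exact absurd (pow_eq_zero_iff two_ne_zero |>.mp h) hb
      · exact h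
    rcases mul_eq_zero.mp h2 with h | h
    · have hα1 : α₁ = 0 := pow_eq_zero_iff two_ne_zero |>.mp h
      have hz : g (aBar l * (xBar l) ^ 2) = 0 := by
        rw [map_mul, map_pow, ha, hx, hα1, hβ2, zero_smul, zero_smul, zero_add, add_zero,
          smul_pow, smul_mul_assoc, mul_smul_comm, smul_smul]
        rw [show xBar r * (aBar r) ^ 2 = (aBar r) ^ 2 * xBar r from mul_comm _ _, rel_a2x,
          smul_zero]
      exact haxx (g.injective (by rw [hz, map_zero]))
    · have hz : g (xBar l) = 0 := by
        rw [hx, h, hβ2, zero_smul, zero_smul, add_zero]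
      exact hxne (g.injective (by rw [hz, map_zero]))
  refine ⟨hβ1, ?_⟩
  rcases mul_eq_zero.mp h2 with h | h
  · exfalso
    have hα1 : α₁ = 0 := pow_eq_zero_iff two_ne_zero |>.mp h
    have hz : g (aBar l) = 0 := by
      rw [ha, hα1, hβ1, zero_smul, zero_smul, add_zero]
    exact hane (g.injective (by rw [hz, map_zero]))
  · exact h
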